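/- If the acceptance probability α : S × S → [0,1] satisfies detailed balance in the form π(x)·α(x, F(x)) = π(F(x))·α(F(x), x) for all x, where F is a measure-preserving involution on S = R^{2D} and π is a probability density, then the Metropolis update with deterministic proposal y = F(x) (accept F(x) with probability α(x, F(x)), otherwise stay at x) leaves the measure with density π invariant. -/
import Mathlib


open MeasureTheory

/-- If the acceptance probability α satisfies detailed balance
π(x)·α(x, F(x)) = π(F(x))·α(F(x), x) for a measure-preserving involution F and a
probability density π, then the Metropolis update with deterministic proposal
y = F(x) leaves the measure with density π invariant. -/
theorem metropolis_deterministic_invariant {D : ℕ}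
    (F : (Fin D → ℝ) × (Fin D → ℝ) → (Fin D → ℝ) × (Fin D → ℝ))
    (hF : MeasurePreserving F volume volume) (hFF : F ∘ F = id)
    (π : (Fin D → ℝ) × (Fin D → ℝ) → ℝ) (hπm : Measurable π)
    (hπ0 : ∀ x, 0 ≤ π x) (hπ1 : ∫ x, π x = 1)
    (α : ((Fin D → ℝ) × (Fin D → ℝ)) × ((Fin D → ℝ) × (Fin D → ℝ)) → ℝ)
    (hαm : Measurable α) (hα : ∀ p, α p ∈ Set.Icc (0 : ℝ) 1)
    (hbal : ∀ x, π x * α (x, F x) = π (F x) * α (F x, x)) :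
    ∀ A : Set ((Fin D → ℝ) × (Fin D → ℝ)), MeasurableSet A →
      ∫ x, (α (x, F x) * A.indicator (fun _ => (1 : ℝ)) (F x)
            + (1 - α (x, F x)) * A.indicator (fun _ => (1 : ℝ)) x) * π x
        = ∫ x in A, π x := by
  intro A hA
  have hFmeas : Measurable F := hF.measurable
  have hFF' : ∀ x, F (F x) = x := fun x => congrFun hFF x
  have hπint : Integrable π := by
    by_contra h
    rw [integral_undef h] at hπ1
    norm_num at hπ1
  set ι : ((Fin D → ℝ) × (Fin D → ℝ)) → ℝ := A.indicator (fun _ => (1 : ℝ)) with hι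
  have hιm : Measurable ι := measurable_const.indicator hA
  have hι0 : ∀ x, 0 ≤ ι x := fun x => by by_cases hx : x ∈ A <;> simp [hι, hx]
  have hι1 : ∀ x, ι x ≤ 1 := fun x => by by_cases hx : x ∈ A <;> simp [hι, hx]
  have hαF : Measurable fun x => α (x, F x) :=
    hαm.comp (measurable_id.prodMk hFmeas)
  -- bound helper
  have hbound : ∀ (f : ((Fin D → ℝ) × (Fin D → ℝ)) → ℝ), Measurable f →
      (∀ x, |f x| ≤ π x) → Integrable f := fun f hm hb =>
    hπint.mono hm.aestronglyMeasurable
      (ae_of_all _ (fun x => (hb x).trans (le_abs_self _)))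
  have habs : ∀ (a b x : _), 0 ≤ a → a ≤ 1 → 0 ≤ b → b ≤ 1 → |a * b * π x| ≤ π x := by
    intro a b x ha0 ha1 hb0 hb1
    rw [abs_of_nonneg (mul_nonneg (mul_nonneg ha0 hb0) (hπ0 x))]
    calc a * b * π x ≤ 1 * 1 * π x := by
          apply mul_le_mul (mul_le_mul ha1 hb1 hb0 zero_le_one) le_rfl (hπ0 x)
          norm_num
      _ = π x := by ring
  -- the three pieces
  have hf1 : Integrable (fun x => α (x, F x) * ι (F x) * π x) :=
    hbound _ ((hαF.mul (hιm.comp hFmeas)).mul hπm)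
      (fun x => habs _ _ _ (hα _).1 (hα _).2 (hι0 _) (hι1 _))
  have hf2 : Integrable (fun x => (1 - α (x, F x)) * ι x * π x) :=
    hbound _ (((measurable_const.sub hαF).mul hιm).mul hπm)
      (fun x => habs _ _ _ (by linarith [(hα (x, F x)).2]) (by linarith [(hα (x, F x)).1])
        (hι0 _) (hι1 _))
  have hf3 : Integrable (fun x => α (x, F x) * ι x * π x) :=
    hbound _ ((hαF.mul hιm).mul hπm)
      (fun x => habs _ _ _ (hα _).1 (hα _).2 (hι0 _) (hι1 _))
  -- measurable equiv for change of variables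
  let e : ((Fin D → ℝ) × (Fin D → ℝ)) ≃ᵐ ((Fin D → ℝ) × (Fin D → ℝ)) :=
    { toFun := F, invFun := F, left_inv := hFF', right_inv := hFF',
      measurable_toFun := hFmeas, measurable_invFun := hFmeas }
  have hcov : ∫ x, α (x, F x) * ι (F x) * π x = ∫ x, α (x, F x) * ι x * π x := by
    have := hF.integral_comp (e.measurableEmbedding)
      (fun x => α (x, F x) * ι (F x) * π x)
    rw [← this]
    congr 1
    funext x
    have h1 : F (F x) = x := hFF' x
    rw [h1]
    have : π (F x) * α (F x, x) = π x * α (x, F x) := (hbal x).symm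
    calc α (F x, x) * ι x * π (F x) = (π (F x) * α (F x, x)) * ι x := by ring
      _ = (π x * α (x, F x)) * ι x := by rw [this]
      _ = α (x, F x) * ι x * π x := by ring
  have hsplit : ∫ x, (α (x, F x) * ι (F x) + (1 - α (x, F x)) * ι x) * π x
      = (∫ x, α (x, F x) * ι (F x) * π x) + ∫ x, (1 - α (x, F x)) * ι x * π x := by
    rw [← integral_add hf1 hf2]
    congr 1; funext x; ring
  rw [hsplit, hcov, ← integral_add hf3 hf2]
  have : ∀ x, α (x, F x) * ι x * π x + (1 - α (x, F x)) * ι x * π x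
      = A.indicator π x := by
    intro x
    by_cases hx : x ∈ A <;> simp [hι, hx] <;> ring
  simp_rw [this]
  exact integral_indicator hA
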